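/- arXiv:1704.04436 — 3 statements merged into one kernel-verified Lean document; each statement's English description precedes it below -/
import Mathlib

section
/- Let σ > 1. Then the supremum over all natural numbers N of the sum ∑_{j=0}^{N} ((j! · (N−j)!)/N!)^{σ−1} is finite. -/
open scoped BigOperators

private lemma choose_mono_half {n k m : ℕ} (hkm : k ≤ m) (hm : m ≤ n / 2) :
    n.choose k ≤ n.choose m := by
  induction m with
  | zero => simp [Nat.le_zero.mp hkm]
  | succ m ih =>
    rcases eq_or_lt_of_le hkm with h | h
    · rw [h]
    · exact (ih (Nat.lt_succ_iff.mp h) (le_trans (Nat.le_succ m) hm)).trans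
        (Nat.choose_le_succ_of_lt_half_left (by omega))

private lemma choose_ge_mid {N k j : ℕ} (hkj : k ≤ j) (hjk : j + k ≤ N) :
    N.choose k ≤ N.choose j := by
  rcases le_or_gt (2 * j) N with h | h
  · exact choose_mono_half hkj (by omega)
  · rw [← Nat.choose_symm (show j ≤ N by omega)]
    exact choose_mono_half (by omega) (by omega)

theorem binom_reciprocal_power_sum_bounded (σ : ℝ) (hσ : 1 < σ) :
    ∃ M : ℝ, ∀ N : ℕ,
      ∑ j ∈ Finset.range (N + 1),
        ((Nat.factorial j * Nat.factorial (N - j) : ℝ) / (Nat.factorial N : ℝ)) ^ (σ - 1) ≤ M := by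
  have hs : 0 < σ - 1 := by linarith
  set k : ℕ := ⌈(2 : ℝ) / (σ - 1)⌉₊ with hk
  have hk2 : (2 : ℝ) ≤ (k : ℝ) * (σ - 1) := by
    have := Nat.le_ceil ((2 : ℝ) / (σ - 1))
    rw [div_le_iff₀ hs] at this
    linarith
  have hk1 : 1 ≤ k := Nat.ceil_pos.mpr (by positivity)
  set A : ℝ := (Nat.factorial k : ℝ) * 2 ^ k with hA
  have hApos : 0 < A := by positivity
  have hA' : 0 ≤ A ^ (σ - 1) := Real.rpow_nonneg hApos.le _
  refine ⟨(k : ℝ) + (k : ℝ) + 2 * A ^ (σ - 1), fun N => ?_⟩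
  -- the base of each term equals 1 / choose N j
  have hbase : ∀ j ∈ Finset.range (N + 1),
      ((Nat.factorial j * Nat.factorial (N - j) : ℝ) / (Nat.factorial N : ℝ))
        = 1 / (N.choose j : ℝ) := by
    intro j hj
    rw [Finset.mem_range] at hj
    have hjN : j ≤ N := by omega
    have := Nat.choose_mul_factorial_mul_factorial hjN
    have hcast : (N.choose j : ℝ) * (Nat.factorial j : ℝ) * (Nat.factorial (N - j) : ℝ)
        = (Nat.factorial N : ℝ) := by exact_mod_cast this
    have hc : (0 : ℝ) < (N.choose j : ℝ) := by
      exact_mod_cast Nat.choose_pos hjN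
    field_simp
    linear_combination hcast
  -- pointwise bound
  have hpoint : ∀ j ∈ Finset.range (N + 1),
      ((Nat.factorial j * Nat.factorial (N - j) : ℝ) / (Nat.factorial N : ℝ)) ^ (σ - 1)
        ≤ (if j < k then (1 : ℝ) else 0) + (if N < j + k then (1 : ℝ) else 0)
          + A ^ (σ - 1) / (N : ℝ) ^ (2 : ℕ) := by
    intro j hj
    rw [hbase j hj, Finset.mem_range] at *
    have hjN : j ≤ N := by omega
    have hc : (1 : ℝ) ≤ (N.choose j : ℝ) := by
      exact_mod_cast Nat.one_le_iff_ne_zero.mpr (Nat.choose_pos hjN).ne'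
    have ht1 : (1 / (N.choose j : ℝ)) ^ (σ - 1) ≤ 1 :=
      Real.rpow_le_one (by positivity) (by rw [div_le_one (by linarith)]; linarith) hs.le
    by_cases h1 : j < k
    · simp only [if_pos h1]
      have : (0:ℝ) ≤ (if N < j + k then (1 : ℝ) else 0) := by positivity
      have hN2 : (0:ℝ) ≤ A ^ (σ - 1) / (N : ℝ) ^ (2 : ℕ) := by positivity
      linarith
    by_cases h2 : N < j + k
    · simp only [if_neg h1, if_pos h2]
      have hN2 : (0:ℝ) ≤ A ^ (σ - 1) / (N : ℝ) ^ (2 : ℕ) := by positivity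
      linarith
    · -- middle case : k ≤ j and j + k ≤ N
      simp only [if_neg h1, if_neg h2, zero_add]
      push_neg at h1 h2
      have h2k : 2 * k ≤ N := by omega
      have hN1 : (1 : ℝ) ≤ (N : ℝ) := by
        exact_mod_cast show 1 ≤ N by omega
      have hNpos : (0 : ℝ) < (N : ℝ) := by linarith
      -- choose N j ≥ choose N k ≥ (N/2)^k / k!
      have hmono : (N.choose k : ℝ) ≤ (N.choose j : ℝ) := by
        exact_mod_cast choose_ge_mid h1 h2
      have hpow : ((N + 1 - k : ℕ) ^ k : ℝ) / (Nat.factorial k : ℝ) ≤ (N.choose k : ℝ) :=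
        Nat.pow_le_choose k N
      have hge : ((N : ℝ) / 2) ^ k / (Nat.factorial k : ℝ) ≤ (N.choose j : ℝ) := by
      -- N/2 ≤ N + 1 - k since 2k ≤ N
        have hsub : ((N : ℝ) / 2) ≤ ((N + 1 - k : ℕ) : ℝ) := by
          have hk' : k ≤ N + 1 := by omega
          have heq : ((N + 1 - k : ℕ) : ℝ) = ((N : ℝ) + 1) - (k : ℝ) := by
            rw [Nat.cast_sub hk']
            push_cast
            ring
          rw [heq]
          have hle : (k : ℝ) ≤ (N : ℝ) / 2 := by
            have h' := (Nat.cast_le (α := ℝ)).mpr h2k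
            push_cast at h'
            linarith
          linarith
        calc ((N : ℝ) / 2) ^ k / (Nat.factorial k : ℝ)
            ≤ ((N + 1 - k : ℕ) ^ k : ℝ) / (Nat.factorial k : ℝ) := by
              gcongr <;> positivity
          _ ≤ (N.choose j : ℝ) := hpow.trans hmono
      have hchoosepos : (0 : ℝ) < (N.choose j : ℝ) := by linarith
      have hbb : 1 / (N.choose j : ℝ) ≤ A / (N : ℝ) ^ k := by
        rw [div_le_div_iff₀ hchoosepos (by positivity), hA]
        have hfac : (0 : ℝ) < (Nat.factorial k : ℝ) := by
          exact_mod_cast Nat.factorial_pos k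
        have hmul := mul_le_mul_of_nonneg_left hge
          (show (0:ℝ) ≤ (Nat.factorial k : ℝ) * 2 ^ k by positivity)
        have heq : ((Nat.factorial k : ℝ) * 2 ^ k) * (((N:ℝ)/2) ^ k / (Nat.factorial k : ℝ))
            = (N : ℝ) ^ k := by
          rw [div_pow]
          field_simp
        nlinarith [hmul, heq]
      calc (1 / (N.choose j : ℝ)) ^ (σ - 1)
          ≤ (A / (N : ℝ) ^ k) ^ (σ - 1) :=
            Real.rpow_le_rpow (by positivity) hbb hs.le
        _ = A ^ (σ - 1) / ((N : ℝ) ^ k) ^ (σ - 1) := by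
            rw [Real.div_rpow hApos.le (by positivity)]
        _ = A ^ (σ - 1) / (N : ℝ) ^ ((k : ℝ) * (σ - 1)) := by
            rw [← Real.rpow_natCast (N : ℝ) k, ← Real.rpow_mul hNpos.le]
        _ ≤ A ^ (σ - 1) / (N : ℝ) ^ (2 : ℕ) := by
            apply div_le_div_of_nonneg_left hA' (by positivity)
            calc ((N : ℝ)) ^ (2 : ℕ) = (N : ℝ) ^ ((2 : ℕ) : ℝ) :=
                  (Real.rpow_natCast _ _).symm
              _ ≤ (N : ℝ) ^ ((k : ℝ) * (σ - 1)) := by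
                  apply Real.rpow_le_rpow_of_exponent_le hN1
                  exact_mod_cast hk2
  calc ∑ j ∈ Finset.range (N + 1),
        ((Nat.factorial j * Nat.factorial (N - j) : ℝ) / (Nat.factorial N : ℝ)) ^ (σ - 1)
      ≤ ∑ j ∈ Finset.range (N + 1),
          ((if j < k then (1 : ℝ) else 0) + (if N < j + k then (1 : ℝ) else 0)
            + A ^ (σ - 1) / (N : ℝ) ^ (2 : ℕ)) := Finset.sum_le_sum hpoint
    _ = (∑ j ∈ Finset.range (N + 1), (if j < k then (1 : ℝ) else 0))
        + (∑ j ∈ Finset.range (N + 1), (if N < j + k then (1 : ℝ) else 0))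
        + (N + 1 : ℝ) * (A ^ (σ - 1) / (N : ℝ) ^ (2 : ℕ)) := by
          rw [Finset.sum_add_distrib, Finset.sum_add_distrib, Finset.sum_const,
            Finset.card_range]
          push_cast
          ring
    _ ≤ (k : ℝ) + (k : ℝ) + 2 * A ^ (σ - 1) := by
        gcongr ?_ + ?_ + ?_
        · rw [Finset.sum_boole]
          have : ((Finset.range (N + 1)).filter (· < k)) ⊆ Finset.range k := by
            intro x hx
            simp only [Finset.mem_filter, Finset.mem_range] at *
            exact hx.2
          have := Finset.card_le_card this
          rw [Finset.card_range] at this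
          exact_mod_cast this
        · rw [Finset.sum_boole]
          have hsub : ((Finset.range (N + 1)).filter (fun j => N < j + k))
              ⊆ Finset.Ico (N + 1 - k) (N + 1) := by
            intro x hx
            simp only [Finset.mem_filter, Finset.mem_range, Finset.mem_Ico] at *
            omega
          have := Finset.card_le_card hsub
          rw [Nat.card_Ico] at this
          have : ((Finset.range (N + 1)).filter (fun j => N < j + k)).card ≤ k := by omega
          exact_mod_cast this
        · rcases Nat.eq_zero_or_pos N with hN | hN
          · subst hN
            simp
            positivity
          · have hN1 : (1 : ℝ) ≤ (N : ℝ) := by exact_mod_cast hN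
            rw [mul_div_assoc', div_le_iff₀ (by positivity)]
            have : (N : ℝ) + 1 ≤ 2 * (N : ℝ) ^ (2 : ℕ) := by nlinarith
            nlinarith
end

section
/- Let n ≥ 2 and 0 < s < n−1. Then for all u ∈ H¹(ℝⁿ), ∫_{ℝⁿ} ⟨x⟩^{−2−s}|u(x)|² dx ≤ (1/(2√((n−1)(n−1−s)))) · (‖∇u‖² + ∫_{ℝⁿ} ⟨x⟩^{−2s}|u(x)|² dx), where ⟨x⟩ = (1+|x|²)^{1/2}. -/
open MeasureTheory Measure Metric Set intervalIntegral Topology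
set_option maxHeartbeats 1000000

noncomputable section
variable {E : Type*} [NormedAddCommGroup E] [NormedSpace ℝ E] [MeasurableSpace E]
  [BorelSpace E] [FiniteDimensional ℝ E] [Nontrivial E]

local notation "dim" => Module.finrank ℝ

theorem polar1 (μ : Measure E) [μ.IsAddHaarMeasure] (F : E → ℝ) :
    ∫ x, F x ∂μ = ∫ p : sphere (0:E) 1 × Ioi (0:ℝ), F ((p.2 : ℝ) • (p.1 : E))
      ∂(μ.toSphere.prod (volumeIoiPow (dim E - 1))) := by
  calc ∫ x, F x ∂μ = ∫ x : ({(0:E)}ᶜ : Set E), F x.1 ∂(μ.comap (↑)) := by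
        rw [integral_subtype_comap (measurableSet_singleton _).compl fun x ↦ F x,
          restrict_compl_singleton]
    _ = ∫ p : sphere (0:E) 1 × Ioi (0:ℝ), F ((p.2 : ℝ) • (p.1 : E))
          ∂(μ.toSphere.prod (volumeIoiPow (dim E - 1))) := by
        rw [← μ.measurePreserving_homeomorphUnitSphereProd.integral_comp
          (Homeomorph.measurableEmbedding _)
          (fun p : sphere (0:E) 1 × Ioi (0:ℝ) => F ((p.2 : ℝ) • (p.1 : E)))]
        refine integral_congr_ae (Filter.Eventually.of_forall fun x => ?_)
        have hx : (x : E) ≠ 0 := x.2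
        simp only [homeomorphUnitSphereProd_apply_snd_coe,
          homeomorphUnitSphereProd_apply_fst_coe]
        rw [smul_inv_smul₀ (norm_ne_zero_iff.2 hx)]

theorem polar1_integrable (μ : Measure E) [μ.IsAddHaarMeasure] (F : E → ℝ)
    (hF : Integrable F μ) :
    Integrable (fun p : sphere (0:E) 1 × Ioi (0:ℝ) => F ((p.2 : ℝ) • (p.1 : E)))
      (μ.toSphere.prod (volumeIoiPow (dim E - 1))) := by
  have h1 : Integrable (fun x : ({(0:E)}ᶜ : Set E) => F x.1) (μ.comap (↑)) := by
    have hmeas := (measurableSet_singleton (0:E)).compl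
    have hF' : IntegrableOn F ({(0:E)}ᶜ) μ := hF.integrableOn
    rw [IntegrableOn, ← map_comap_subtype_coe hmeas] at hF'
    exact (integrable_map_measure
      (by rw [map_comap_subtype_coe hmeas]; exact hF.aestronglyMeasurable.restrict)
      measurable_subtype_coe.aemeasurable).1 hF'
  rw [← μ.measurePreserving_homeomorphUnitSphereProd.integrable_comp_emb
    (Homeomorph.measurableEmbedding _)]
  apply h1.congr
  refine Filter.Eventually.of_forall fun x => ?_
  have hx : (x : E) ≠ 0 := x.2
  simp only [Function.comp_apply, homeomorphUnitSphereProd_apply_snd_coe,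
    homeomorphUnitSphereProd_apply_fst_coe]
  rw [smul_inv_smul₀ (norm_ne_zero_iff.2 hx)]

theorem integrable_comap_subtype {α : Type*} [MeasurableSpace α] {μ : Measure α} {s : Set α}
    (hs : MeasurableSet s) (f : α → ℝ) :
    Integrable (fun x : s => f x) (μ.comap (↑)) ↔ IntegrableOn f s μ := by
  rw [IntegrableOn, ← map_comap_subtype_coe hs,
    (MeasurableEmbedding.subtype_coe hs).integrable_map_iff]
  rfl

theorem volumeIoiPow_integrable_iff (m : ℕ) (h : ℝ → ℝ) :
    Integrable (fun r : Ioi (0:ℝ) => h r) (volumeIoiPow m) ↔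
      IntegrableOn (fun r => r ^ m * h r) (Ioi (0:ℝ)) := by
  rw [volumeIoiPow, integrable_withDensity_iff
    ((measurable_subtype_coe.pow_const _).ennreal_ofReal)
    (Filter.Eventually.of_forall fun _ => ENNReal.ofReal_lt_top)]
  rw [show (fun r : Ioi (0:ℝ) => h r * (ENNReal.ofReal (r.1 ^ m)).toReal)
      = fun r : Ioi (0:ℝ) => (fun t : ℝ => h t * (ENNReal.ofReal (t ^ m)).toReal) r from rfl]
  rw [integrable_comap_subtype (μ := (volume : Measure ℝ)) measurableSet_Ioi
      (fun t : ℝ => h t * (ENNReal.ofReal (t ^ m)).toReal)]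
  constructor
  · intro H
    refine H.congr ?_
    filter_upwards [ae_restrict_mem measurableSet_Ioi] with t ht
    rw [ENNReal.toReal_ofReal (pow_nonneg ht.out.le _), mul_comm]
  · intro H
    refine H.congr ?_
    filter_upwards [ae_restrict_mem measurableSet_Ioi] with t ht
    rw [ENNReal.toReal_ofReal (pow_nonneg ht.out.le _), mul_comm]

theorem volumeIoiPow_integral (m : ℕ) (h : ℝ → ℝ) :
    ∫ r : Ioi (0:ℝ), h r ∂(volumeIoiPow m) = ∫ r in Ioi (0:ℝ), r ^ m * h r := by
  simp only [volumeIoiPow, ENNReal.ofReal]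
  rw [integral_withDensity_eq_integral_smul
    ((measurable_subtype_coe.pow_const _).real_toNNReal),
    integral_subtype_comap measurableSet_Ioi fun a ↦ Real.toNNReal (a ^ m) • h a,
    setIntegral_congr_fun measurableSet_Ioi fun x hx ↦ ?_]
  rw [NNReal.smul_def, Real.coe_toNNReal _ (pow_nonneg hx.out.le _), smul_eq_mul]

theorem polar_integral (μ : Measure E) [μ.IsAddHaarMeasure] (F : E → ℝ)
    (hF : Integrable F μ) :
    ∫ x, F x ∂μ = ∫ ω : sphere (0:E) 1,
      (∫ r in Ioi (0:ℝ), r ^ (dim E - 1) * F (r • (ω : E))) ∂μ.toSphere := by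
  rw [polar1 μ F, integral_prod _ (polar1_integrable μ F hF)]
  refine integral_congr_ae (Filter.Eventually.of_forall fun ω => ?_)
  exact volumeIoiPow_integral (dim E - 1) (fun r => F (r • (ω : E)))

theorem polar_slice_integrable (μ : Measure E) [μ.IsAddHaarMeasure] (F : E → ℝ)
    (hF : Integrable F μ) :
    ∀ᵐ (ω : sphere (0:E) 1) ∂μ.toSphere, IntegrableOn (fun r => r ^ (dim E - 1) * F (r • (ω : E)))
      (Ioi (0:ℝ)) := by
  filter_upwards [(polar1_integrable μ F hF).prod_right_ae] with ω hω
  exact (volumeIoiPow_integrable_iff (dim E - 1) (fun r => F (r • (ω : E)))).1 hω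

theorem polar_outer_integrable (μ : Measure E) [μ.IsAddHaarMeasure] (F : E → ℝ)
    (hF : Integrable F μ) :
    Integrable (fun ω : sphere (0:E) 1 =>
      ∫ r in Ioi (0:ℝ), r ^ (dim E - 1) * F (r • (ω : E))) μ.toSphere := by
  have := (polar1_integrable μ F hF).integral_prod_left
  refine this.congr (Filter.Eventually.of_forall fun ω => ?_)
  exact volumeIoiPow_integral (dim E - 1) (fun r => F (r • (ω : E)))

end

noncomputable section
open Set


theorem ray_lemma (m : ℕ) (hm : 1 ≤ m) (s c : ℝ) (hs : 0 < s) (hc : 0 ≤ c)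
    (hkey : ∀ r : ℝ, 0 < r → c * r ≤ (m : ℝ) + ((m : ℝ) - s) * r ^ 2)
    (f d : ℝ → ℝ) (hf_cont : Continuous f) (hf_nonneg : ∀ r, 0 ≤ f r)
    (hderiv : ∀ r ∈ Ioi (0:ℝ), HasDerivAt f (d r) r)
    (hdm : AEStronglyMeasurable d (volume.restrict (Ioi (0:ℝ))))
    (hfi : IntegrableOn (fun r => r ^ m * f r) (Ioi (0:ℝ)))
    (hdi : IntegrableOn (fun r => r ^ m * |d r|) (Ioi (0:ℝ))) :
    c * ∫ r in Ioi (0:ℝ), r ^ m * ((1 + r ^ 2) ^ (-s/2 - 1) * f r) ≤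
      ∫ r in Ioi (0:ℝ), r ^ m * ((1 + r ^ 2) ^ (-s/2) * |d r|) := by
  have hpos : ∀ r : ℝ, (0:ℝ) < 1 + r ^ 2 := fun r => by positivity
  -- weight functions
  set w : ℝ → ℝ := fun r => r ^ m * ((1 + r ^ 2) ^ (-s/2 - 1) * f r) with hw
  set gd : ℝ → ℝ := fun r => r ^ m * ((1 + r ^ 2) ^ (-s/2) * |d r|) with hgd
  set G : ℝ → ℝ := fun r => r ^ m * (1 + r ^ 2) ^ (-s/2) with hG
  set G' : ℝ → ℝ := fun r =>
    (m : ℝ) * r ^ (m - 1) * (1 + r ^ 2) ^ (-s/2)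
      + r ^ m * (((-s/2) * (1 + r ^ 2) ^ (-s/2 - 1)) * (2 * r)) with hG'
  have hrpow_cont : Continuous fun r : ℝ => (1 + r ^ 2) ^ (-s/2) :=
    (continuous_const.add (continuous_pow 2)).rpow_const fun r => Or.inl (hpos r).ne'
  have hrpow_cont' : Continuous fun r : ℝ => (1 + r ^ 2) ^ (-s/2 - 1) :=
    (continuous_const.add (continuous_pow 2)).rpow_const fun r => Or.inl (hpos r).ne'
  have hw_cont : Continuous w := ((continuous_pow m).mul (hrpow_cont'.mul hf_cont))
  have hw_nonneg : ∀ r ∈ Ioi (0:ℝ), 0 ≤ w r := fun r hr =>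
    mul_nonneg (pow_nonneg (le_of_lt hr) m)
      (mul_nonneg (Real.rpow_pos_of_pos (hpos r) _).le (hf_nonneg r))
  have hG_cont : Continuous G := (continuous_pow m).mul hrpow_cont
  have hG_nonneg : ∀ r ∈ Ioi (0:ℝ), 0 ≤ G r := fun r hr =>
    mul_nonneg (pow_nonneg (le_of_lt hr) m) (Real.rpow_pos_of_pos (hpos r) _).le
  have hG'_cont : Continuous G' :=
    ((continuous_const.mul (continuous_pow (m-1))).mul hrpow_cont).add
      ((continuous_pow m).mul ((continuous_const.mul hrpow_cont').mul
        (continuous_const.mul continuous_id)))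
  have hGderiv : ∀ r : ℝ, HasDerivAt G (G' r) r := by
    intro r
    have h1 : HasDerivAt (fun r : ℝ => 1 + r ^ 2) (2 * r) r := by
      simpa using (hasDerivAt_pow 2 r).const_add 1
    have h2 : HasDerivAt (fun r : ℝ => (1 + r ^ 2) ^ (-s/2))
        (((-s/2) * (1 + r ^ 2) ^ (-s/2 - 1)) * (2 * r)) r := by
      have := (h1.rpow_const (p := -s/2) (Or.inl (hpos r).ne'))
      convert this using 1
      ring
    simpa [hG', Pi.mul_def] using (hasDerivAt_pow m r).mul h2
  -- pointwise lower bound for G'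
  have hGlb : ∀ r ∈ Ioi (0:ℝ), c * (r ^ m * (1 + r ^ 2) ^ (-s/2 - 1)) ≤ G' r := by
    intro r hr
    have hr0 : (0:ℝ) < r := hr
    have hsplit : (1 + r ^ 2 : ℝ) ^ (-s/2) = (1 + r ^ 2) ^ (-s/2 - 1) * (1 + r ^ 2) := by
      have h := Real.rpow_add (hpos r) (-s/2 - 1) 1
      rw [Real.rpow_one] at h
      conv_lhs => rw [show (-s/2 : ℝ) = -s/2 - 1 + 1 by ring]
      exact h
    have hrm : r ^ m = r ^ (m - 1) * r := by
      conv_lhs => rw [show m = (m - 1) + 1 from (Nat.succ_pred_eq_of_pos hm).symm]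
      rw [pow_succ]
    have hG'eq : G' r = r ^ (m - 1) * (1 + r ^ 2) ^ (-s/2 - 1)
        * ((m : ℝ) * (1 + r ^ 2) - s * r ^ 2) := by
      simp only [hG']
      rw [hsplit, hrm]; ring
    rw [hG'eq, hrm]
    have hP : (0:ℝ) ≤ r ^ (m - 1) * (1 + r ^ 2) ^ (-s/2 - 1) := by
      have := (Real.rpow_pos_of_pos (hpos r) (-s/2 - 1)).le
      positivity
    have := hkey r hr0
    nlinarith [hP, hkey r hr0]
  -- the RHS integral is finite
  have hdm_abs : AEStronglyMeasurable (fun r => |d r|) (volume.restrict (Ioi (0:ℝ))) := by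
    simpa [Real.norm_eq_abs] using hdm.norm
  have hgd_meas : AEStronglyMeasurable gd (volume.restrict (Ioi (0:ℝ))) :=
    (continuous_pow m).aestronglyMeasurable.mul
      (hrpow_cont.aestronglyMeasurable.mul hdm_abs)
  have hgd_int : IntegrableOn gd (Ioi (0:ℝ)) := by
    refine Integrable.mono' hdi hgd_meas ?_
    filter_upwards [ae_restrict_mem measurableSet_Ioi] with r hr
    have h1 : (1 + r ^ 2 : ℝ) ^ (-s/2) ≤ 1 :=
      Real.rpow_le_one_of_one_le_of_nonpos (by nlinarith) (by linarith)
    have h2 : (0:ℝ) ≤ (1 + r ^ 2) ^ (-s/2) := (Real.rpow_pos_of_pos (hpos r) _).le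
    have hr0 : (0:ℝ) ≤ r := le_of_lt hr
    have hm0 : (0:ℝ) ≤ r ^ m := pow_nonneg hr0 m
    rw [Real.norm_eq_abs,
      abs_of_nonneg (mul_nonneg hm0 (mul_nonneg h2 (abs_nonneg _)))]
    refine mul_le_mul_of_nonneg_left ?_ hm0
    calc (1 + r ^ 2) ^ (-s/2) * |d r| ≤ 1 * |d r| :=
          mul_le_mul_of_nonneg_right h1 (abs_nonneg _)
      _ = |d r| := one_mul _
  have hw_int : IntegrableOn w (Ioi (0:ℝ)) := by
    refine Integrable.mono' hfi hw_cont.aestronglyMeasurable.restrict ?_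
    filter_upwards [ae_restrict_mem measurableSet_Ioi] with r hr
    have h1 : (1 + r ^ 2 : ℝ) ^ (-s/2 - 1) ≤ 1 :=
      Real.rpow_le_one_of_one_le_of_nonpos (by nlinarith) (by linarith)
    have h2 : (0:ℝ) ≤ (1 + r ^ 2) ^ (-s/2 - 1) := (Real.rpow_pos_of_pos (hpos r) _).le
    have hr0 : (0:ℝ) ≤ r := le_of_lt hr
    have hm0 : (0:ℝ) ≤ r ^ m := pow_nonneg hr0 m
    rw [Real.norm_eq_abs,
      abs_of_nonneg (mul_nonneg hm0 (mul_nonneg h2 (hf_nonneg r)))]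
    refine mul_le_mul_of_nonneg_left ?_ hm0
    calc (1 + r ^ 2) ^ (-s/2 - 1) * f r ≤ 1 * f r :=
          mul_le_mul_of_nonneg_right h1 (hf_nonneg r)
      _ = f r := one_mul _
  set I : ℝ := ∫ r in Ioi (0:ℝ), gd r with hI
  -- finite-interval estimate with inner cutoff
  have key0 : ∀ ε R : ℝ, 0 < ε → ε ≤ R →
      c * ∫ r in Ioc ε R, w r ≤ G R * f R + I := by
    intro ε R hε hεR
    have hsub : Ioc ε R ⊆ Ioi (0:ℝ) := fun x hx => lt_of_lt_of_le hε hx.1.le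
    have hd_ii : IntervalIntegrable d volume ε R := by
      rw [intervalIntegrable_iff_integrableOn_Ioc_of_le hεR]
      refine Integrable.mono' ((hdi.mono_set hsub).const_mul ((ε ^ m)⁻¹))
        (hdm.mono_measure (Measure.restrict_mono hsub le_rfl)) ?_
      filter_upwards [ae_restrict_mem measurableSet_Ioc] with r hr
      have h1 : (1:ℝ) ≤ (ε ^ m)⁻¹ * r ^ m := by
        rw [inv_mul_eq_div, le_div_iff₀ (pow_pos hε m)]
        simpa using pow_le_pow_left₀ hε.le hr.1.le m
      calc ‖d r‖ = 1 * |d r| := by rw [Real.norm_eq_abs, one_mul]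
        _ ≤ ((ε ^ m)⁻¹ * r ^ m) * |d r| :=
            mul_le_mul_of_nonneg_right h1 (abs_nonneg _)
        _ = (ε ^ m)⁻¹ * (r ^ m * |d r|) := by ring
    have hG'f_ii : IntervalIntegrable (fun r => G' r * f r) volume ε R :=
      (hG'_cont.mul hf_cont).intervalIntegrable ε R
    have hGd_ii : IntervalIntegrable (fun r => G r * d r) volume ε R :=
      hd_ii.continuousOn_mul hG_cont.continuousOn
    have h_ibp : (∫ r in ε..R, G' r * f r) + ∫ r in ε..R, G r * d r
        = G R * f R - G ε * f ε := by
      rw [← intervalIntegral.integral_add hG'f_ii hGd_ii]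
      refine intervalIntegral.integral_deriv_mul_eq_sub
        (fun x _ => hGderiv x) (fun x hx => hderiv x ?_)
        (hG'_cont.intervalIntegrable ε R) hd_ii
      rw [uIcc_of_le hεR] at hx
      exact lt_of_lt_of_le hε hx.1
    have h_mono : c * ∫ r in Ioc ε R, w r ≤ ∫ r in ε..R, G' r * f r := by
      rw [← intervalIntegral.integral_of_le hεR, ← intervalIntegral.integral_const_mul]
      refine intervalIntegral.integral_mono_on hεR
        ((continuous_const.mul hw_cont).intervalIntegrable ε R) hG'f_ii ?_
      intro x hx
      have hx0 : x ∈ Ioi (0:ℝ) := lt_of_lt_of_le hε hx.1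
      have h1 := mul_le_mul_of_nonneg_right (hGlb x hx0) (hf_nonneg x)
      calc c * w x = (c * (x ^ m * (1 + x ^ 2) ^ (-s/2 - 1))) * f x := by
            simp only [hw]; ring
        _ ≤ G' x * f x := h1
    have h_Gd : -(∫ r in ε..R, G r * d r) ≤ I := by
      have h1 : |∫ r in ε..R, G r * d r| ≤ ∫ r in ε..R, |G r * d r| :=
        intervalIntegral.abs_integral_le_integral_abs hεR
      have h2 : (∫ r in ε..R, |G r * d r|) ≤ I := by
        rw [intervalIntegral.integral_of_le hεR]
        have : ∀ r ∈ Ioc ε R, |G r * d r| = gd r := by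
          intro r hr
          have h0 : (0:ℝ) ≤ G r := hG_nonneg r (hsub hr)
          rw [abs_mul, abs_of_nonneg h0]
          simp only [hG, hgd]; ring
        rw [setIntegral_congr_fun measurableSet_Ioc this]
        refine setIntegral_mono_set hgd_int ?_ (HasSubset.Subset.eventuallyLE hsub)
        filter_upwards [ae_restrict_mem measurableSet_Ioi] with r hr
        have h0 : (0:ℝ) ≤ (1 + r ^ 2) ^ (-s/2) := (Real.rpow_pos_of_pos (hpos r) _).le
        exact mul_nonneg (pow_nonneg hr.out.le m) (mul_nonneg h0 (abs_nonneg _))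
      linarith [neg_abs_le (∫ r in ε..R, G r * d r)]
    have hGε : 0 ≤ G ε * f ε := mul_nonneg (hG_nonneg ε hε) (hf_nonneg ε)
    linarith
  -- remove the inner cutoff
  have key : ∀ R : ℝ, 0 < R → c * ∫ r in Ioc (0:ℝ) R, w r ≤ G R * f R + I := by
    intro R hR
    have hwR : IntegrableOn w (Ioc (0:ℝ) R) := hw_int.mono_set Ioc_subset_Ioi_self
    have hU : ⋃ k : ℕ, Ioc (1 / ((k:ℝ) + 1)) R = Ioc (0:ℝ) R := by
      ext x
      simp only [mem_iUnion, mem_Ioc]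
      constructor
      · rintro ⟨k, h1, h2⟩
        exact ⟨lt_trans (by positivity) h1, h2⟩
      · rintro ⟨h1, h2⟩
        refine ⟨⌈1 / x⌉₊, ?_, h2⟩
        rw [div_lt_iff₀ (by positivity)]
        have h3 : 1 / x ≤ (⌈1 / x⌉₊ : ℝ) := Nat.le_ceil _
        rw [div_le_iff₀ h1] at h3
        nlinarith
    have hmono : Monotone fun k : ℕ => Ioc (1 / ((k:ℝ) + 1)) R := by
      intro i j hij
      refine Ioc_subset_Ioc_left (one_div_le_one_div_of_le (by positivity) ?_)
      have : (i:ℝ) ≤ j := Nat.cast_le.2 hij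
      linarith
    have htend : Filter.Tendsto (fun k : ℕ => ∫ r in Ioc (1 / ((k:ℝ) + 1)) R, w r)
        Filter.atTop (𝓝 (∫ r in Ioc (0:ℝ) R, w r)) := by
      have := tendsto_setIntegral_of_monotone (f := w)
        (s := fun k : ℕ => Ioc (1 / ((k:ℝ) + 1)) R)
        (fun k => measurableSet_Ioc) hmono (by rw [hU]; exact hwR)
      rwa [hU] at this
    refine le_of_tendsto (htend.const_mul c) ?_
    rw [Filter.eventually_atTop]
    refine ⟨⌈1 / R⌉₊, fun k hk => ?_⟩
    have hε : (0:ℝ) < 1 / ((k:ℝ) + 1) := by positivity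
    refine key0 _ R hε ?_
    have h3 : 1 / R ≤ (⌈1 / R⌉₊ : ℝ) := Nat.le_ceil _
    have h4 : ((⌈1 / R⌉₊ : ℕ) : ℝ) ≤ (k:ℝ) := Nat.cast_le.2 hk
    rw [div_le_iff₀ (by positivity)]
    rw [div_le_iff₀ hR] at h3
    nlinarith
  -- conclusion
  suffices hfin : c * ∫ r in Ioi (0:ℝ), w r ≤ I by exact hfin
  by_contra hlt
  push_neg at hlt
  have hU : ⋃ k : ℕ, Ioc (0:ℝ) (k:ℝ) = Ioi (0:ℝ) := by
    ext x
    simp only [mem_iUnion, mem_Ioc, mem_Ioi]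
    constructor
    · rintro ⟨k, h1, _⟩; exact h1
    · intro h1
      obtain ⟨k, hk⟩ := exists_nat_ge x
      exact ⟨k, h1, hk⟩
  have htend : Filter.Tendsto (fun k : ℕ => ∫ r in Ioc (0:ℝ) (k:ℝ), w r)
      Filter.atTop (𝓝 (∫ r in Ioi (0:ℝ), w r)) := by
    have := tendsto_setIntegral_of_monotone (f := w)
      (s := fun k : ℕ => Ioc (0:ℝ) (k:ℝ))
      (fun k => measurableSet_Ioc)
      (fun i j hij => Ioc_subset_Ioc_right (Nat.cast_le.2 hij))
      (by rw [hU]; exact hw_int)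
    rwa [hU] at this
  obtain ⟨k, hk⟩ := ((htend.const_mul c).eventually_const_lt hlt).exists
  set η : ℝ := c * (∫ r in Ioc (0:ℝ) (k:ℝ), w r) - I with hη
  have hηpos : 0 < η := by simp only [hη]; linarith
  set R₀ : ℝ := max (k:ℝ) 1 with hR₀
  have hR₀pos : (0:ℝ) < R₀ := lt_of_lt_of_le one_pos (le_max_right _ _)
  have hHlb : ∀ r ∈ Ioi R₀, η ≤ G r * f r := by
    intro r hr
    have hr0 : (0:ℝ) < r := lt_trans hR₀pos hr
    have h1 := key r hr0
    have h2 : (∫ x in Ioc (0:ℝ) (k:ℝ), w x) ≤ ∫ x in Ioc (0:ℝ) r, w x := by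
      refine setIntegral_mono_set (hw_int.mono_set Ioc_subset_Ioi_self) ?_
        (HasSubset.Subset.eventuallyLE (Ioc_subset_Ioc_right ?_))
      · filter_upwards [ae_restrict_mem measurableSet_Ioc] with x hx
        exact hw_nonneg x hx.1
      · exact le_trans (le_max_left _ _) (le_of_lt hr)
    have h3 : c * (∫ x in Ioc (0:ℝ) (k:ℝ), w x) ≤ c * ∫ x in Ioc (0:ℝ) r, w x :=
      mul_le_mul_of_nonneg_left h2 hc
    simp only [hη]
    linarith
  have hH_int : IntegrableOn (fun r => G r * f r) (Ioi R₀) := by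
    have hsub : Ioi R₀ ⊆ Ioi (0:ℝ) := Ioi_subset_Ioi hR₀pos.le
    refine Integrable.mono' (hfi.mono_set hsub)
      ((hG_cont.mul hf_cont).aestronglyMeasurable.restrict) ?_
    filter_upwards [ae_restrict_mem measurableSet_Ioi] with r hr
    have hr0 : (0:ℝ) < r := hsub hr
    have h1 : (1 + r ^ 2 : ℝ) ^ (-s/2) ≤ 1 :=
      Real.rpow_le_one_of_one_le_of_nonpos (by nlinarith) (by linarith)
    have h2 : (0:ℝ) ≤ (1 + r ^ 2) ^ (-s/2) := (Real.rpow_pos_of_pos (hpos r) _).le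
    have hm0 : (0:ℝ) ≤ r ^ m := pow_nonneg hr0.le m
    rw [Real.norm_eq_abs,
      abs_of_nonneg (mul_nonneg (mul_nonneg hm0 h2) (hf_nonneg r))]
    calc r ^ m * (1 + r ^ 2) ^ (-s/2) * f r ≤ r ^ m * 1 * f r :=
          mul_le_mul_of_nonneg_right
            (mul_le_mul_of_nonneg_left h1 hm0) (hf_nonneg r)
      _ = r ^ m * f r := by ring
  have hconst : IntegrableOn (fun _ : ℝ => η) (Ioi R₀) := by
    refine Integrable.mono' hH_int aestronglyMeasurable_const ?_
    filter_upwards [ae_restrict_mem measurableSet_Ioi] with r hr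
    rw [Real.norm_eq_abs, abs_of_pos hηpos]
    exact hHlb r hr
  rw [integrableOn_const_iff] at hconst
  rcases hconst with h | h
  · exact absurd (enorm_eq_zero.1 h) (ne_of_gt hηpos)
  · rw [Real.volume_Ioi] at h
    exact absurd h (by simp)

open Metric

open Topology in
theorem weighted_hardy_type_inequality (n : ℕ) (hn : 2 ≤ n) (s : ℝ) (hs0 : 0 < s)
    (hs1 : s < (n : ℝ) - 1)
    (u : EuclideanSpace ℝ (Fin n) → ℂ)
    (hu : Differentiable ℝ u)
    (hu2 : Integrable (fun x => ‖u x‖ ^ 2))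
    (hgrad : Integrable (fun x => ‖fderiv ℝ u x‖ ^ 2)) :
    ∫ x : EuclideanSpace ℝ (Fin n), (1 + ‖x‖ ^ 2) ^ ((-2 - s) / 2) * ‖u x‖ ^ 2 ≤
      (1 / (2 * Real.sqrt (((n : ℝ) - 1) * ((n : ℝ) - 1 - s)))) *
        ((∫ x : EuclideanSpace ℝ (Fin n), ‖fderiv ℝ u x‖ ^ 2) +
          ∫ x : EuclideanSpace ℝ (Fin n), (1 + ‖x‖ ^ 2) ^ (-s) * ‖u x‖ ^ 2) := by
  have hn1 : (2:ℝ) ≤ (n:ℝ) := by exact_mod_cast hn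
  haveI : Nontrivial (EuclideanSpace ℝ (Fin n)) :=
    Module.nontrivial_of_finrank_pos (R := ℝ) (by rw [finrank_euclideanSpace_fin]; omega)
  set m : ℕ := n - 1 with hmdef
  have hm1 : 1 ≤ m := by omega
  have hmcast : ((m : ℕ) : ℝ) = (n:ℝ) - 1 := by
    rw [hmdef, Nat.cast_sub (by omega : 1 ≤ n), Nat.cast_one]
  set c : ℝ := 2 * Real.sqrt (((n : ℝ) - 1) * ((n : ℝ) - 1 - s)) with hcdef
  have ha0 : (0:ℝ) < (n:ℝ) - 1 := by linarith
  have hb0 : (0:ℝ) < (n:ℝ) - 1 - s := by linarith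
  have hcpos : 0 < c := by
    rw [hcdef]
    exact mul_pos two_pos (Real.sqrt_pos.2 (mul_pos ha0 hb0))
  have hkey : ∀ r : ℝ, 0 < r → c * r ≤ (m : ℝ) + ((m : ℝ) - s) * r ^ 2 := by
    intro r hr
    rw [hmcast]
    have hc2 : c = 2 * (Real.sqrt ((n:ℝ) - 1) * Real.sqrt ((n:ℝ) - 1 - s)) := by
      rw [hcdef, Real.sqrt_mul ha0.le]
    nlinarith [sq_nonneg (Real.sqrt ((n:ℝ) - 1) - Real.sqrt ((n:ℝ) - 1 - s) * r),
      Real.sq_sqrt ha0.le, Real.sq_sqrt hb0.le,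
      Real.sqrt_nonneg ((n:ℝ) - 1), Real.sqrt_nonneg ((n:ℝ) - 1 - s)]
  have hwpos : ∀ x : EuclideanSpace ℝ (Fin n), (0:ℝ) < 1 + ‖x‖ ^ 2 := fun x => by positivity
  have hwle1 : ∀ p : ℝ, p ≤ 0 → ∀ x : EuclideanSpace ℝ (Fin n), (1 + ‖x‖ ^ 2) ^ p ≤ 1 :=
    fun p hp x => Real.rpow_le_one_of_one_le_of_nonpos (by nlinarith [sq_nonneg ‖x‖]) hp
  have hcont_w : ∀ p : ℝ, Continuous fun x : EuclideanSpace ℝ (Fin n) => (1 + ‖x‖ ^ 2) ^ p :=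
    fun p => (continuous_const.add (continuous_norm.pow 2)).rpow_const
      fun x => Or.inl (hwpos x).ne'
  have hu_cont : Continuous u := hu.continuous
  -- the radial derivative field
  set D : EuclideanSpace ℝ (Fin n) → ℝ := fun x =>
    2 * ((u x).re * ((fderiv ℝ u x) (‖x‖⁻¹ • x)).re
      + (u x).im * ((fderiv ℝ u x) (‖x‖⁻¹ • x)).im) with hDdef
  have hdir_meas : Measurable fun x : EuclideanSpace ℝ (Fin n) => ‖x‖⁻¹ • x :=
    (measurable_norm.inv).smul measurable_id
  have happly_meas : Measurable fun x : EuclideanSpace ℝ (Fin n) =>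
      (fderiv ℝ u x) (‖x‖⁻¹ • x) := by
    have h1 : Measurable fun x : EuclideanSpace ℝ (Fin n) =>
        ((fderiv ℝ u x, ‖x‖⁻¹ • x) :
          (EuclideanSpace ℝ (Fin n) →L[ℝ] ℂ) × EuclideanSpace ℝ (Fin n)) :=
      (measurable_fderiv ℝ u).prodMk hdir_meas
    exact (isBoundedBilinearMap_apply.continuous.measurable).comp h1
  have hD_meas : Measurable D := by
    apply Measurable.const_mul
    exact ((Complex.measurable_re.comp hu_cont.measurable).mul
        (Complex.measurable_re.comp happly_meas)).add
      ((Complex.measurable_im.comp hu_cont.measurable).mul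
        (Complex.measurable_im.comp happly_meas))
  have hD_bound : ∀ x, |D x| ≤ 2 * ‖u x‖ * ‖fderiv ℝ u x‖ := by
    intro x
    set L := fderiv ℝ u x with hL
    set v := ‖x‖⁻¹ • x with hv
    have hv1 : ‖v‖ ≤ 1 := by
      rcases eq_or_ne x 0 with h | h
      · simp [hv, h]
      · rw [hv, norm_smul, norm_inv, norm_norm,
          inv_mul_cancel₀ (norm_ne_zero_iff.2 h)]
    have hLv : ‖L v‖ ≤ ‖L‖ := by
      calc ‖L v‖ ≤ ‖L‖ * ‖v‖ := L.le_opNorm v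
        _ ≤ ‖L‖ * 1 := mul_le_mul_of_nonneg_left hv1 (norm_nonneg L)
        _ = ‖L‖ := mul_one _
    have habs : |(u x).re * (L v).re + (u x).im * (L v).im| ≤ ‖u x‖ * ‖L v‖ := by
      have h1 : ‖u x‖ = Real.sqrt ((u x).re ^ 2 + (u x).im ^ 2) := by
        rw [Complex.norm_def, Complex.normSq_apply]
        congr 1; ring
      have h2 : ‖L v‖ = Real.sqrt ((L v).re ^ 2 + (L v).im ^ 2) := by
        rw [Complex.norm_def, Complex.normSq_apply]
        congr 1; ring
      rw [h1, h2, ← Real.sqrt_mul (by positivity)]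
      refine Real.abs_le_sqrt ?_
      nlinarith [sq_nonneg ((u x).re * (L v).im - (u x).im * (L v).re)]
    calc |D x| = 2 * |(u x).re * (L v).re + (u x).im * (L v).im| := by
          simp only [hDdef]; rw [abs_mul, abs_two]
      _ ≤ 2 * (‖u x‖ * ‖L v‖) := by linarith
      _ ≤ 2 * (‖u x‖ * ‖L‖) :=
          mul_le_mul_of_nonneg_left
            (mul_le_mul_of_nonneg_left hLv (norm_nonneg _)) two_pos.le
      _ = 2 * ‖u x‖ * ‖L‖ := by ring
  have hPbound : ∀ x : EuclideanSpace ℝ (Fin n),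
      (1 + ‖x‖ ^ 2) ^ (-s/2) * |D x| ≤
        ‖fderiv ℝ u x‖ ^ 2 + (1 + ‖x‖ ^ 2) ^ (-s) * ‖u x‖ ^ 2 := by
    intro x
    have ht := hwpos x
    have hA : (0:ℝ) < (1 + ‖x‖ ^ 2) ^ (-s/2) := Real.rpow_pos_of_pos ht _
    have h2 : (1 + ‖x‖ ^ 2 : ℝ) ^ (-s/2) * (1 + ‖x‖ ^ 2) ^ (-s/2)
        = (1 + ‖x‖ ^ 2) ^ (-s) := by
      rw [← Real.rpow_add ht]; congr 1; ring
    calc (1 + ‖x‖ ^ 2) ^ (-s/2) * |D x|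
        ≤ (1 + ‖x‖ ^ 2) ^ (-s/2) * (2 * ‖u x‖ * ‖fderiv ℝ u x‖) :=
          mul_le_mul_of_nonneg_left (hD_bound x) hA.le
      _ = 2 * ((1 + ‖x‖ ^ 2) ^ (-s/2) * ‖u x‖) * ‖fderiv ℝ u x‖ := by ring
      _ ≤ ‖fderiv ℝ u x‖ ^ 2 + ((1 + ‖x‖ ^ 2) ^ (-s/2) * ‖u x‖) ^ 2 := by
          nlinarith [sq_nonneg (‖fderiv ℝ u x‖ - (1 + ‖x‖ ^ 2) ^ (-s/2) * ‖u x‖)]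
      _ = ‖fderiv ℝ u x‖ ^ 2 + (1 + ‖x‖ ^ 2) ^ (-s) * ‖u x‖ ^ 2 := by
          rw [mul_pow, sq ((1 + ‖x‖ ^ 2) ^ (-s/2)), h2]
  -- integrable functions on E
  set F2 : EuclideanSpace ℝ (Fin n) → ℝ :=
    fun x => (1 + ‖x‖ ^ 2) ^ (-s/2 - 1) * ‖u x‖ ^ 2 with hF2def
  set W1 : EuclideanSpace ℝ (Fin n) → ℝ :=
    fun x => (1 + ‖x‖ ^ 2) ^ (-s) * ‖u x‖ ^ 2 with hW1def
  set P : EuclideanSpace ℝ (Fin n) → ℝ :=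
    fun x => (1 + ‖x‖ ^ 2) ^ (-s/2) * |D x| with hPdef
  have hF2int : Integrable F2 := by
    refine Integrable.mono' hu2
      (((hcont_w _).mul (hu_cont.norm.pow 2)).aestronglyMeasurable) ?_
    refine Filter.Eventually.of_forall fun x => ?_
    have h1 := hwle1 (-s/2 - 1) (by linarith) x
    have h2 : (0:ℝ) ≤ (1 + ‖x‖ ^ 2) ^ (-s/2 - 1) := (Real.rpow_pos_of_pos (hwpos x) _).le
    rw [Real.norm_eq_abs, abs_of_nonneg (mul_nonneg h2 (by positivity))]
    calc (1 + ‖x‖ ^ 2) ^ (-s/2 - 1) * ‖u x‖ ^ 2 ≤ 1 * ‖u x‖ ^ 2 :=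
          mul_le_mul_of_nonneg_right h1 (by positivity)
      _ = ‖u x‖ ^ 2 := one_mul _
  have hW1int : Integrable W1 := by
    refine Integrable.mono' hu2
      (((hcont_w _).mul (hu_cont.norm.pow 2)).aestronglyMeasurable) ?_
    refine Filter.Eventually.of_forall fun x => ?_
    have h1 := hwle1 (-s) (by linarith) x
    have h2 : (0:ℝ) ≤ (1 + ‖x‖ ^ 2) ^ (-s) := (Real.rpow_pos_of_pos (hwpos x) _).le
    rw [Real.norm_eq_abs, abs_of_nonneg (mul_nonneg h2 (by positivity))]
    calc (1 + ‖x‖ ^ 2) ^ (-s) * ‖u x‖ ^ 2 ≤ 1 * ‖u x‖ ^ 2 :=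
          mul_le_mul_of_nonneg_right h1 (by positivity)
      _ = ‖u x‖ ^ 2 := one_mul _
  have hDint : Integrable (fun x => |D x|) := by
    refine Integrable.mono' (hgrad.add hu2) (hD_meas.abs.aestronglyMeasurable) ?_
    refine Filter.Eventually.of_forall fun x => ?_
    rw [Real.norm_eq_abs, abs_abs]
    have := hD_bound x
    simp only [Pi.add_apply]
    nlinarith [sq_nonneg (‖u x‖ - ‖fderiv ℝ u x‖), abs_nonneg (D x)]
  have hPint : Integrable P := by
    refine Integrable.mono' (hgrad.add hW1int)
      (((hcont_w _).aestronglyMeasurable).mul (hD_meas.abs.aestronglyMeasurable)) ?_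
    refine Filter.Eventually.of_forall fun x => ?_
    have h2 : (0:ℝ) ≤ (1 + ‖x‖ ^ 2) ^ (-s/2) := (Real.rpow_pos_of_pos (hwpos x) _).le
    rw [Real.norm_eq_abs, abs_of_nonneg (mul_nonneg h2 (abs_nonneg _))]
    simp only [Pi.add_apply]
    exact hPbound x
  -- polar coordinates
  have hsphere_norm : ∀ ω : sphere (0 : EuclideanSpace ℝ (Fin n)) 1, ‖(ω : EuclideanSpace ℝ (Fin n))‖ = 1 :=
    fun ω => mem_sphere_zero_iff_norm.1 ω.2
  have hnorm_smul : ∀ (r : ℝ) (ω : sphere (0 : EuclideanSpace ℝ (Fin n)) 1),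
      ‖r • (ω : EuclideanSpace ℝ (Fin n))‖ ^ 2 = r ^ 2 := by
    intro r ω
    rw [norm_smul, hsphere_norm, mul_one, Real.norm_eq_abs, sq_abs]
  have hdimm : Module.finrank ℝ (EuclideanSpace ℝ (Fin n)) - 1 = m := by
    rw [finrank_euclideanSpace_fin]
  have h2polar := polar_integral (volume : Measure (EuclideanSpace ℝ (Fin n))) F2 hF2int
  have hPpolar := polar_integral (volume : Measure (EuclideanSpace ℝ (Fin n))) P hPint
  rw [hdimm] at h2polar hPpolar
  have e2 : ∀ ω : sphere (0 : EuclideanSpace ℝ (Fin n)) 1,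
      (∫ r in Set.Ioi (0:ℝ), r ^ m * F2 (r • (ω : EuclideanSpace ℝ (Fin n))))
        = ∫ r in Set.Ioi (0:ℝ), r ^ m *
            ((1 + r ^ 2) ^ (-s/2 - 1) * ‖u (r • (ω : EuclideanSpace ℝ (Fin n)))‖ ^ 2) := by
    intro ω
    congr 1
    funext r
    rw [hF2def]
    simp only [hnorm_smul r ω]
  have eP : ∀ ω : sphere (0 : EuclideanSpace ℝ (Fin n)) 1,
      (∫ r in Set.Ioi (0:ℝ), r ^ m * P (r • (ω : EuclideanSpace ℝ (Fin n))))
        = ∫ r in Set.Ioi (0:ℝ), r ^ m *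
            ((1 + r ^ 2) ^ (-s/2) * |D (r • (ω : EuclideanSpace ℝ (Fin n)))|) := by
    intro ω
    congr 1
    funext r
    rw [hPdef]
    simp only [hnorm_smul r ω]
  -- slice integrability
  have hslice2 := polar_slice_integrable (volume : Measure (EuclideanSpace ℝ (Fin n)))
    (fun x => ‖u x‖ ^ 2) hu2
  have hsliceD := polar_slice_integrable (volume : Measure (EuclideanSpace ℝ (Fin n)))
    (fun x => |D x|) hDint
  rw [hdimm] at hslice2 hsliceD
  -- a.e. comparison of the ray integrals
  have hae : ∀ᵐ (ω : sphere (0 : EuclideanSpace ℝ (Fin n)) 1)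
      ∂(volume : Measure (EuclideanSpace ℝ (Fin n))).toSphere,
      c * (∫ r in Set.Ioi (0:ℝ), r ^ m *
          ((1 + r ^ 2) ^ (-s/2 - 1) * ‖u (r • (ω : EuclideanSpace ℝ (Fin n)))‖ ^ 2))
        ≤ ∫ r in Set.Ioi (0:ℝ), r ^ m *
            ((1 + r ^ 2) ^ (-s/2) * |D (r • (ω : EuclideanSpace ℝ (Fin n)))|) := by
    filter_upwards [hslice2, hsliceD] with ω h1 h2
    refine ray_lemma m hm1 s c hs0 hcpos.le hkey
      (fun r => ‖u (r • (ω : EuclideanSpace ℝ (Fin n)))‖ ^ 2)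
      (fun r => D (r • (ω : EuclideanSpace ℝ (Fin n)))) ?_ ?_ ?_ ?_ h1 h2
    · exact (hu_cont.comp (continuous_id.smul continuous_const)).norm.pow 2
    · exact fun r => by positivity
    · intro r hr
      have hr0 : (0:ℝ) < r := hr
      have hγ : HasDerivAt (fun t : ℝ => t • (ω : EuclideanSpace ℝ (Fin n)))
          (ω : EuclideanSpace ℝ (Fin n)) r := by
        simpa using (hasDerivAt_id r).smul_const (ω : EuclideanSpace ℝ (Fin n))
      have hc1 : HasDerivAt (fun t : ℝ => u (t • (ω : EuclideanSpace ℝ (Fin n))))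
          ((fderiv ℝ u (r • (ω : EuclideanSpace ℝ (Fin n)))) (ω : EuclideanSpace ℝ (Fin n))) r :=
        (hu.differentiableAt.hasFDerivAt).comp_hasDerivAt r hγ
      have hre : HasDerivAt (fun t : ℝ => (u (t • (ω : EuclideanSpace ℝ (Fin n)))).re)
          ((fderiv ℝ u (r • (ω : EuclideanSpace ℝ (Fin n)))) (ω : EuclideanSpace ℝ (Fin n))).re r :=
        (Complex.reCLM.hasFDerivAt.comp_hasDerivAt r hc1)
      have him : HasDerivAt (fun t : ℝ => (u (t • (ω : EuclideanSpace ℝ (Fin n)))).im)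
          ((fderiv ℝ u (r • (ω : EuclideanSpace ℝ (Fin n)))) (ω : EuclideanSpace ℝ (Fin n))).im r :=
        (Complex.imCLM.hasFDerivAt.comp_hasDerivAt r hc1)
      have hsum := (hre.mul hre).add (him.mul him)
      have heq : (fun t : ℝ => ‖u (t • (ω : EuclideanSpace ℝ (Fin n)))‖ ^ 2)
          = fun t : ℝ => (u (t • (ω : EuclideanSpace ℝ (Fin n)))).re
              * (u (t • (ω : EuclideanSpace ℝ (Fin n)))).re
            + (u (t • (ω : EuclideanSpace ℝ (Fin n)))).im
              * (u (t • (ω : EuclideanSpace ℝ (Fin n)))).im := by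
        funext t
        rw [Complex.sq_norm, Complex.normSq_apply]
      rw [heq]
      have hdir : ‖r • (ω : EuclideanSpace ℝ (Fin n))‖⁻¹ • (r • (ω : EuclideanSpace ℝ (Fin n)))
          = (ω : EuclideanSpace ℝ (Fin n)) := by
        rw [norm_smul, hsphere_norm, mul_one, Real.norm_eq_abs, abs_of_pos hr0, smul_smul,
          inv_mul_cancel₀ hr0.ne', one_smul]
      have hDeq : D (r • (ω : EuclideanSpace ℝ (Fin n)))
          = (fderiv ℝ u (r • (ω : EuclideanSpace ℝ (Fin n)))
                (ω : EuclideanSpace ℝ (Fin n))).re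
              * (u (r • (ω : EuclideanSpace ℝ (Fin n)))).re
            + (u (r • (ω : EuclideanSpace ℝ (Fin n)))).re
              * (fderiv ℝ u (r • (ω : EuclideanSpace ℝ (Fin n)))
                  (ω : EuclideanSpace ℝ (Fin n))).re
            + ((fderiv ℝ u (r • (ω : EuclideanSpace ℝ (Fin n)))
                  (ω : EuclideanSpace ℝ (Fin n))).im
                * (u (r • (ω : EuclideanSpace ℝ (Fin n)))).im
              + (u (r • (ω : EuclideanSpace ℝ (Fin n)))).im
                * (fderiv ℝ u (r • (ω : EuclideanSpace ℝ (Fin n)))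
                    (ω : EuclideanSpace ℝ (Fin n))).im) := by
        rw [hDdef]
        simp only [hdir]
        ring
      simpa only [hDeq, Pi.add_def, Pi.mul_def] using hsum
    · exact ((hD_meas.comp
        ((continuous_id.smul (continuous_const :
          Continuous fun _ : ℝ => (ω : EuclideanSpace ℝ (Fin n)))).measurable)).aestronglyMeasurable).restrict
  -- outer integrability
  have houter2 := polar_outer_integrable (volume : Measure (EuclideanSpace ℝ (Fin n))) F2 hF2int
  have houterP := polar_outer_integrable (volume : Measure (EuclideanSpace ℝ (Fin n))) P hPint
  rw [hdimm] at houter2 houterP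
  have houter2' : Integrable (fun ω : sphere (0 : EuclideanSpace ℝ (Fin n)) 1 =>
      ∫ r in Set.Ioi (0:ℝ), r ^ m *
        ((1 + r ^ 2) ^ (-s/2 - 1) * ‖u (r • (ω : EuclideanSpace ℝ (Fin n)))‖ ^ 2))
      (volume : Measure (EuclideanSpace ℝ (Fin n))).toSphere := by
    refine houter2.congr (Filter.Eventually.of_forall fun ω => ?_)
    exact e2 ω
  have houterP' : Integrable (fun ω : sphere (0 : EuclideanSpace ℝ (Fin n)) 1 =>
      ∫ r in Set.Ioi (0:ℝ), r ^ m *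
        ((1 + r ^ 2) ^ (-s/2) * |D (r • (ω : EuclideanSpace ℝ (Fin n)))|))
      (volume : Measure (EuclideanSpace ℝ (Fin n))).toSphere := by
    refine houterP.congr (Filter.Eventually.of_forall fun ω => ?_)
    exact eP ω
  -- the main chain
  have hchain : c * (∫ x, F2 x) ≤ (∫ x, ‖fderiv ℝ u x‖ ^ 2) + ∫ x, W1 x := by
    have step1 : c * (∫ x, F2 x) ≤ ∫ x, P x := by
      rw [h2polar, hPpolar]
      rw [integral_congr_ae (Filter.Eventually.of_forall e2),
        integral_congr_ae (Filter.Eventually.of_forall eP)]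
      rw [← MeasureTheory.integral_const_mul]
      exact integral_mono_ae (houter2'.const_mul c) houterP' hae
    have step2 : (∫ x, P x) ≤ ∫ x, (‖fderiv ℝ u x‖ ^ 2 + W1 x) :=
      integral_mono hPint (hgrad.add hW1int) hPbound
    rw [integral_add hgrad hW1int] at step2
    linarith
  -- finish
  have hgoal_eq : (∫ x : EuclideanSpace ℝ (Fin n), (1 + ‖x‖ ^ 2) ^ ((-2 - s) / 2) * ‖u x‖ ^ 2)
      = ∫ x, F2 x := by
    congr 1
    funext x
    rw [show ((-2 - s) / 2 : ℝ) = -s/2 - 1 by ring]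
  rw [hgoal_eq, one_div_mul_eq_div, le_div_iff₀ hcpos, mul_comm]
  exact hchain

end
end

section
/- Let 0 < μ < 1, M ≥ 1, a > 0 and for N ∈ ℕ set R_N = M⟨(2N−1)μ⟩^{1/(1−μ)} where ⟨t⟩ = (1+t²)^{1/2}. Then there exists A ≥ 1 (depending only on μ, a, M) such that sup_{x ∈ ℝⁿ} e^{−a⟨x⟩^{1−μ}} (1 + |x|²/R_N²)^{Nμ} ≤ ⟨A⟩^{2Nμ} for all N ≥ 1. -/
open Real
set_option maxHeartbeats 1600000 in

theorem exp_weight_key (μ a M : ℝ)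
    (hμ0 : 0 < μ) (hμ1 : μ < 1) (ha : 0 < a) (hM : 1 ≤ M) :
    ∃ A : ℝ, 1 ≤ A ∧ ∀ N : ℕ, 1 ≤ N → ∀ r : ℝ, 0 ≤ r →
      Real.exp (-a * (1 + r ^ 2) ^ ((1 - μ) / 2)) *
          (1 + r ^ 2 /
              (M * (1 + ((2 * (N : ℝ) - 1) * μ) ^ 2) ^ (1 / (2 * (1 - μ)))) ^ 2) ^ ((N : ℝ) * μ)
        ≤ (1 + A ^ 2) ^ ((N : ℝ) * μ) := by
  have h1μ : (0:ℝ) < 1 - μ := by linarith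
  set ε : ℝ := (1 - μ) / 4 with hεdef
  have hε : 0 < ε := by positivity
  set K : ℝ := (2 / (ε * a)) ^ (1 / ε) with hKdef
  have hK0 : 0 ≤ K := rpow_nonneg (by positivity) _
  refine ⟨max 1 K, le_max_left _ _, ?_⟩
  set A : ℝ := max 1 K with hAdef
  have hA1 : 1 ≤ A := le_max_left _ _
  intro N hN r hr0
  set b : ℝ := 1 + ((2 * (N : ℝ) - 1) * μ) ^ 2 with hbdef
  have hb1 : 1 ≤ b := by nlinarith [sq_nonneg ((2 * (N : ℝ) - 1) * μ)]
  have hb0 : (0:ℝ) < b := by linarith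
  set R : ℝ := M * b ^ (1 / (2 * (1 - μ))) with hRdef
  have hRpow1 : 1 ≤ b ^ (1 / (2 * (1 - μ))) :=
    one_le_rpow hb1 (by positivity)
  have hR1 : 1 ≤ R := one_le_mul_of_one_le_of_one_le hM hRpow1
  have hR0 : (0:ℝ) < R := by linarith
  set u : ℝ := r ^ 2 / R ^ 2 with hudef
  have hu0 : 0 ≤ u := by positivity
  have hNμ0 : 0 ≤ (N : ℝ) * μ := by positivity
  by_cases hcase : u ≤ A ^ 2
  · have h1 : (1 + u) ^ ((N : ℝ) * μ) ≤ (1 + A ^ 2) ^ ((N : ℝ) * μ) :=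
      rpow_le_rpow (by positivity) (by linarith) hNμ0
    have h2 : Real.exp (-a * (1 + r ^ 2) ^ ((1 - μ) / 2)) ≤ 1 := by
      rw [Real.exp_le_one_iff]
      have : 0 ≤ (1 + r ^ 2) ^ ((1 - μ) / 2) := rpow_nonneg (by positivity) _
      nlinarith
    calc Real.exp (-a * (1 + r ^ 2) ^ ((1 - μ) / 2)) * (1 + u) ^ ((N : ℝ) * μ)
        ≤ 1 * (1 + u) ^ ((N : ℝ) * μ) :=
          mul_le_mul_of_nonneg_right h2 (rpow_nonneg (by positivity) _)
      _ = (1 + u) ^ ((N : ℝ) * μ) := one_mul _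
      _ ≤ (1 + A ^ 2) ^ ((N : ℝ) * μ) := h1
  · push_neg at hcase
    have hA2 : 1 ≤ A ^ 2 := one_le_pow₀ hA1
    have hu1 : 1 ≤ u := by linarith
    have hupos : 0 < u := by linarith
    -- K ≤ u
    have hKu : K ≤ u := by
      have : K ≤ A := le_max_right _ _
      have hAA : A ≤ A ^ 2 := by nlinarith
      linarith
    -- step 1 : log (1+u) ≤ a * u ^ ((1-μ)/2)
    have hlog : Real.log (1 + u) ≤ a * u ^ ((1 - μ) / 2) := by
      have l1 : Real.log (1 + u) ≤ (1 + u) ^ ε / ε :=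
        log_le_rpow_div (by positivity) hε
      have l2 : (1 + u) ^ ε ≤ 2 * u ^ ε := by
        calc (1 + u) ^ ε ≤ (2 * u) ^ ε :=
              rpow_le_rpow (by positivity) (by linarith) hε.le
          _ = 2 ^ ε * u ^ ε := mul_rpow (by norm_num) hu0
          _ ≤ 2 * u ^ ε := by
              have : (2:ℝ) ^ ε ≤ 2 ^ (1:ℝ) :=
                rpow_le_rpow_of_exponent_le (by norm_num) (by simp [hεdef]; linarith)
              have h2ε : (2:ℝ) ^ ε ≤ 2 := by simpa using this
              have := rpow_nonneg hu0 ε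
              nlinarith
      have l3 : 2 / (ε * a) ≤ u ^ ε := by
        have hKε : K ^ ε = 2 / (ε * a) := by
          rw [hKdef, ← Real.rpow_mul (by positivity), one_div,
            inv_mul_cancel₀ hε.ne', rpow_one]
        calc 2 / (ε * a) = K ^ ε := hKε.symm
          _ ≤ u ^ ε := rpow_le_rpow hK0 hKu hε.le
      have huε : 0 < u ^ ε := rpow_pos_of_pos hupos ε
      have hsplit : u ^ ((1 - μ) / 2) = u ^ ε * u ^ ε := by
        rw [← Real.rpow_add hupos]
        congr 1
        rw [hεdef]; ring
      rw [hsplit]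
      calc Real.log (1 + u) ≤ (1 + u) ^ ε / ε := l1
        _ ≤ 2 * u ^ ε / ε := by gcongr
        _ ≤ a * (u ^ ε * u ^ ε) := by
          rw [div_le_iff₀ hε]
          rw [div_le_iff₀ (by positivity : 0 < ε * a)] at l3
          nlinarith [huε.le]
    -- step 2 : (N:ℝ) * μ * u ^ ((1-μ)/2) ≤ (1 + r^2) ^ ((1-μ)/2)
    have hr2 : r ^ 2 = u * R ^ 2 := by
      rw [hudef]; field_simp
    have hR1μ : (N : ℝ) * μ ≤ R ^ (1 - μ) := by
      have hsq : Real.sqrt b = b ^ ((1:ℝ)/2) := Real.sqrt_eq_rpow b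
      have hbs : (2 * (N : ℝ) - 1) * μ ≤ Real.sqrt b := by
        have h0 : 0 ≤ (2 * (N : ℝ) - 1) * μ := by
          have : (1:ℝ) ≤ (N:ℝ) := by exact_mod_cast hN
          nlinarith
        have : (2 * (N : ℝ) - 1) * μ = Real.sqrt (((2 * (N : ℝ) - 1) * μ) ^ 2) := by
          rw [Real.sqrt_sq h0]
        rw [this]
        exact Real.sqrt_le_sqrt (by rw [hbdef]; linarith)
      have hRexp : R ^ (1 - μ) = M ^ (1 - μ) * b ^ ((1:ℝ)/2) := by
        rw [hRdef, mul_rpow (by positivity) (rpow_nonneg hb0.le _),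
          ← Real.rpow_mul hb0.le]
        have : 1 / (2 * (1 - μ)) * (1 - μ) = (1:ℝ)/2 := by
          field_simp
        rw [this]
      have hM1μ : 1 ≤ M ^ (1 - μ) := one_le_rpow hM h1μ.le
      have hNle : (N : ℝ) * μ ≤ (2 * (N : ℝ) - 1) * μ := by
        have : (1:ℝ) ≤ (N:ℝ) := by exact_mod_cast hN
        nlinarith
      have hb2 : 0 ≤ b ^ ((1:ℝ)/2) := rpow_nonneg hb0.le _
      rw [hRexp]
      calc (N : ℝ) * μ ≤ (2 * (N : ℝ) - 1) * μ := hNle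
        _ ≤ Real.sqrt b := hbs
        _ = b ^ ((1:ℝ)/2) := hsq
        _ = 1 * b ^ ((1:ℝ)/2) := (one_mul _).symm
        _ ≤ M ^ (1 - μ) * b ^ ((1:ℝ)/2) := by gcongr
    have hsR : u ^ ((1 - μ) / 2) * R ^ (1 - μ) ≤ (1 + r ^ 2) ^ ((1 - μ) / 2) := by
      have hRR : (R ^ 2 : ℝ) ^ ((1 - μ)/2) = R ^ (1 - μ) := by
        rw [← Real.rpow_natCast R 2, ← Real.rpow_mul hR0.le]
        congr 1
        push_cast
        ring
      calc u ^ ((1 - μ) / 2) * R ^ (1 - μ)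
          = u ^ ((1 - μ)/2) * (R ^ 2 : ℝ) ^ ((1 - μ)/2) := by rw [hRR]
        _ = (u * R ^ 2) ^ ((1 - μ)/2) := (mul_rpow hu0 (by positivity)).symm
        _ = (r ^ 2) ^ ((1 - μ)/2) := by rw [← hr2]
        _ ≤ (1 + r ^ 2) ^ ((1 - μ)/2) := rpow_le_rpow (by positivity) (by linarith) (by positivity)
    -- combine : LHS ≤ 1
    have hmain : (N : ℝ) * μ * Real.log (1 + u) ≤ a * (1 + r ^ 2) ^ ((1 - μ) / 2) := by
      have s1 : (N : ℝ) * μ * Real.log (1 + u) ≤ (N : ℝ) * μ * (a * u ^ ((1 - μ) / 2)) :=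
        mul_le_mul_of_nonneg_left hlog hNμ0
      have huu : 0 ≤ u ^ ((1 - μ)/2) := rpow_nonneg hu0 _
      have s2 : (N : ℝ) * μ * u ^ ((1 - μ)/2) ≤ R ^ (1 - μ) * u ^ ((1 - μ)/2) :=
        mul_le_mul_of_nonneg_right hR1μ huu
      have s3 : R ^ (1 - μ) * u ^ ((1 - μ)/2) ≤ (1 + r ^ 2) ^ ((1 - μ)/2) := by
        rw [mul_comm]; exact hsR
      nlinarith
    have hpow : (1 + u) ^ ((N : ℝ) * μ) ≤ Real.exp (a * (1 + r ^ 2) ^ ((1 - μ) / 2)) := by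
      rw [rpow_def_of_pos (by linarith)]
      exact Real.exp_le_exp.2 (by rw [mul_comm]; exact hmain)
    have hle1 : Real.exp (-a * (1 + r ^ 2) ^ ((1 - μ) / 2)) * (1 + u) ^ ((N : ℝ) * μ) ≤ 1 := by
      have := mul_le_mul_of_nonneg_left hpow (Real.exp_pos (-a * (1 + r ^ 2) ^ ((1 - μ) / 2))).le
      calc Real.exp (-a * (1 + r ^ 2) ^ ((1 - μ) / 2)) * (1 + u) ^ ((N : ℝ) * μ)
          ≤ Real.exp (-a * (1 + r ^ 2) ^ ((1 - μ) / 2)) *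
              Real.exp (a * (1 + r ^ 2) ^ ((1 - μ) / 2)) := this
        _ = 1 := by rw [← Real.exp_add]; ring_nf; exact Real.exp_zero
    have hge1 : (1:ℝ) ≤ (1 + A ^ 2) ^ ((N : ℝ) * μ) :=
      one_le_rpow (by linarith) hNμ0
    linarith

theorem exp_weight_dominates_polynomial_weight (n : ℕ) (μ a M : ℝ)
    (hμ0 : 0 < μ) (hμ1 : μ < 1) (ha : 0 < a) (hM : 1 ≤ M) :
    ∃ A : ℝ, 1 ≤ A ∧ ∀ N : ℕ, 1 ≤ N → ∀ x : EuclideanSpace ℝ (Fin n),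
      Real.exp (-a * (1 + ‖x‖ ^ 2) ^ ((1 - μ) / 2)) *
          (1 + ‖x‖ ^ 2 /
              (M * (1 + ((2 * (N : ℝ) - 1) * μ) ^ 2) ^ (1 / (2 * (1 - μ)))) ^ 2) ^ ((N : ℝ) * μ)
        ≤ (1 + A ^ 2) ^ ((N : ℝ) * μ) := by
  obtain ⟨A, hA1, hA⟩ := exp_weight_key μ a M hμ0 hμ1 ha hM
  exact ⟨A, hA1, fun N hN x => hA N hN ‖x‖ (norm_nonneg x)⟩
end
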